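/- If 2n nonoverlapping unit balls are packed into a ball of radius 1+√2 in ℝⁿ (n ≥ 2), then their centers form the vertex set of a regular cross-polytope: centers = {c ± √2·eᵢ : i = 1..n} for the container's center c and some orthonormal basis e₁,...,eₙ. -/

import Mathlib

open FiniteDimensional Module

lemma lemA : ∀ (n : ℕ) (E : Type) [NormedAddCommGroup E] [InnerProductSpace ℝ E]
    [FiniteDimensional ℝ E], finrank ℝ E = n →
    ∀ (ι : Type) [Fintype ι] (v : ι → E), (∀ i, v i ≠ 0) →
    (∀ i j, i ≠ j → inner ℝ (v i) (v j) ≤ (0:ℝ)) → Fintype.card ι ≤ 2 * n := by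
  intro n
  induction n with
  | zero =>
    intro E _ _ _ hE ι _ v hnz _
    have : Subsingleton E := finrank_zero_iff.mp hE
    by_contra h
    have : Nonempty ι := Fintype.card_pos_iff.mp (by omega)
    obtain ⟨i⟩ := this
    exact hnz i (Subsingleton.elim _ _)
  | succ n IH =>
    intro E _ _ _ hE ι _ v hnz hneg
    classical
    by_cases hempty : IsEmpty ι
    · simp [Fintype.card_eq_zero]
    obtain ⟨i₀⟩ := not_isEmpty_iff.mp hempty
    set K := (ℝ ∙ v i₀)ᗮ with hK
    haveI : Fact (finrank ℝ E = n + 1) := ⟨hE⟩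
    have hKrank : finrank ℝ K = n := Submodule.finrank_orthogonal_span_singleton (hnz i₀)
    have hv₀ : (0:ℝ) < ‖v i₀‖ ^ 2 := pow_pos (norm_pos_iff.mpr (hnz i₀)) 2
    set w : ι → E := fun i => v i - ((inner ℝ (v i₀) (v i) : ℝ) / ‖v i₀‖ ^ 2) • v i₀ with hw
    have hwK : ∀ i, w i ∈ K := by
      intro i
      rw [hK, Submodule.mem_orthogonal_singleton_iff_inner_right]
      rw [hw]
      simp only [inner_sub_right, inner_smul_right, real_inner_self_eq_norm_sq]
      field_simp [norm_ne_zero_iff.mpr (hnz i₀)]; ring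
    have hinner : ∀ i j, (inner ℝ (w i) (w j) : ℝ) =
        inner ℝ (v i) (v j) - (inner ℝ (v i₀) (v i) : ℝ) * (inner ℝ (v i₀) (v j) : ℝ) / ‖v i₀‖ ^ 2 := by
      intro i j
      rw [hw]
      simp only [inner_sub_left, inner_sub_right, inner_smul_left, inner_smul_right,
        real_inner_self_eq_norm_sq, RCLike.conj_to_real]
      rw [real_inner_comm (v i₀) (v i)]
      field_simp [norm_ne_zero_iff.mpr (hnz i₀)]; ring
    have hwneg : ∀ i j, i ≠ i₀ → j ≠ i₀ → i ≠ j → (inner ℝ (w i) (w j) : ℝ) ≤ 0 := by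
      intro i j hi hj hij
      rw [hinner]
      have h1 : (inner ℝ (v i) (v j) : ℝ) ≤ 0 := hneg i j hij
      have h2 : (0:ℝ) ≤ (inner ℝ (v i₀) (v i) : ℝ) * (inner ℝ (v i₀) (v j) : ℝ) := by
        nlinarith [hneg i₀ i (Ne.symm hi), hneg i₀ j (Ne.symm hj)]
      have := div_nonneg h2 (le_of_lt hv₀)
      linarith
    have hzero : ∀ i, i ≠ i₀ → w i = 0 →
        ∃ t : ℝ, t < 0 ∧ v i = t • v i₀ := by
      intro i hi hwi
      have hvi : v i = ((inner ℝ (v i₀) (v i) : ℝ) / ‖v i₀‖ ^ 2) • v i₀ :=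
        sub_eq_zero.mp hwi
      refine ⟨_, ?_, hvi⟩
      rcases lt_or_eq_of_le (div_nonpos_of_nonpos_of_nonneg (hneg i₀ i (Ne.symm hi))
        (le_of_lt hv₀)) with h | h
      · exact h
      · exfalso; apply hnz i; rw [hvi, h, zero_smul]
    -- at most one zero-projection index
    have honez : ∀ i j, i ≠ i₀ → j ≠ i₀ → w i = 0 → w j = 0 → i = j := by
      intro i j hi hj hwi hwj
      by_contra hij
      obtain ⟨t, ht, hvi⟩ := hzero i hi hwi
      obtain ⟨s, hs, hvj⟩ := hzero j hj hwj
      have heq : (inner ℝ (v i) (v j) : ℝ) = t * s * ‖v i₀‖ ^ 2 := by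
        rw [hvi, hvj, inner_smul_left, inner_smul_right, real_inner_self_eq_norm_sq]
        simp only [conj_trivial]; ring
      nlinarith [hneg i j hij, mul_pos_of_neg_of_neg ht hs]
    -- apply IH inside K
    have hcard : Fintype.card {i : ι // i ≠ i₀ ∧ w i ≠ 0} ≤ 2 * n := by
      refine IH K hKrank _ (fun i => (⟨w i.1, hwK i.1⟩ : K)) ?_ ?_
      · intro i
        simp only [ne_eq, Submodule.mk_eq_zero]
        exact i.2.2
      · intro i j hij
        rw [Submodule.coe_inner]
        exact hwneg i.1 j.1 i.2.1 j.2.1 (fun h => hij (Subtype.ext h))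
    -- counting
    have hsplit : (Finset.univ : Finset ι) ⊆
        {i₀} ∪ Finset.univ.filter (fun i => i ≠ i₀ ∧ w i = 0)
            ∪ Finset.univ.filter (fun i => i ≠ i₀ ∧ w i ≠ 0) := by
      intro i _
      simp only [Finset.mem_union, Finset.mem_singleton, Finset.mem_filter, Finset.mem_univ,
        true_and]
      by_cases h1 : i = i₀
      · tauto
      · by_cases h2 : w i = 0 <;> tauto
    have hZ : (Finset.univ.filter (fun i => i ≠ i₀ ∧ w i = 0)).card ≤ 1 := by
      rw [Finset.card_le_one]
      intro a ha b hb
      simp only [Finset.mem_filter] at ha hb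
      exact honez a b ha.2.1 hb.2.1 ha.2.2 hb.2.2
    have hN : (Finset.univ.filter (fun i => i ≠ i₀ ∧ w i ≠ 0)).card ≤ 2 * n := by
      rw [← Fintype.card_subtype]
      exact hcard
    calc Fintype.card ι = (Finset.univ : Finset ι).card := rfl
      _ ≤ _ := Finset.card_le_card hsplit
      _ ≤ ({i₀} : Finset ι).card + (Finset.univ.filter (fun i => i ≠ i₀ ∧ w i = 0)).card
            + (Finset.univ.filter (fun i => i ≠ i₀ ∧ w i ≠ 0)).card := by
          apply le_trans (Finset.card_union_le _ _)
          gcongr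
          exact Finset.card_union_le _ _
      _ ≤ 1 + 1 + 2 * n := by
          gcongr
          simp
      _ ≤ 2 * (n + 1) := by omega

lemma lemB : ∀ (n : ℕ) (E : Type) [NormedAddCommGroup E] [InnerProductSpace ℝ E]
    [FiniteDimensional ℝ E], finrank ℝ E = n →
    ∀ (v : Fin (2 * n) → E), (∀ i, v i ≠ 0) →
    (∀ i j, i ≠ j → inner ℝ (v i) (v j) ≤ (0:ℝ)) →
    ∃ e : Fin n → E, Orthonormal ℝ e ∧ ∀ i, ∃ (k : Fin n) (t : ℝ), t ≠ 0 ∧ v i = t • e k := by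
  intro n
  induction n with
  | zero =>
    intro E _ _ _ hE v hnz hneg
    exact ⟨Fin.elim0, ⟨fun i => i.elim0, fun i => i.elim0⟩, fun i => i.elim0⟩
  | succ n IH =>
    intro E _ _ _ hE v hnz hneg
    classical
    set K := (ℝ ∙ v 0)ᗮ with hK
    haveI : Fact (finrank ℝ E = n + 1) := ⟨hE⟩
    have hKrank : finrank ℝ K = n := Submodule.finrank_orthogonal_span_singleton (hnz 0)
    have hv₀ : (0:ℝ) < ‖v 0‖ ^ 2 := pow_pos (norm_pos_iff.mpr (hnz 0)) 2
    set w : Fin (2 * (n+1)) → E :=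
      fun i => v i - ((inner ℝ (v 0) (v i) : ℝ) / ‖v 0‖ ^ 2) • v 0 with hw
    have hwK : ∀ i, w i ∈ K := by
      intro i
      rw [hK, Submodule.mem_orthogonal_singleton_iff_inner_right]
      rw [hw]
      simp only [inner_sub_right, inner_smul_right, real_inner_self_eq_norm_sq]
      field_simp [norm_ne_zero_iff.mpr (hnz 0)]; ring
    have hinner : ∀ i j, (inner ℝ (w i) (w j) : ℝ) =
        inner ℝ (v i) (v j) - (inner ℝ (v 0) (v i) : ℝ) * (inner ℝ (v 0) (v j) : ℝ) / ‖v 0‖ ^ 2 := by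
      intro i j
      rw [hw]
      simp only [inner_sub_left, inner_sub_right, inner_smul_left, inner_smul_right,
        real_inner_self_eq_norm_sq, RCLike.conj_to_real]
      rw [real_inner_comm (v 0) (v i)]
      field_simp [norm_ne_zero_iff.mpr (hnz 0)]; ring
    have hwneg : ∀ i j, i ≠ 0 → j ≠ 0 → i ≠ j → (inner ℝ (w i) (w j) : ℝ) ≤ 0 := by
      intro i j hi hj hij
      rw [hinner]
      have h1 : (inner ℝ (v i) (v j) : ℝ) ≤ 0 := hneg i j hij
      have h2 : (0:ℝ) ≤ (inner ℝ (v 0) (v i) : ℝ) * (inner ℝ (v 0) (v j) : ℝ) := by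
        nlinarith [hneg 0 i (Ne.symm hi), hneg 0 j (Ne.symm hj)]
      have := div_nonneg h2 (le_of_lt hv₀)
      linarith
    -- there is an index j₀ ≠ 0 with zero projection
    have hexj : ∃ j₀ : Fin (2 * (n+1)), j₀ ≠ 0 ∧ w j₀ = 0 := by
      by_contra hcon
      push_neg at hcon
      have hcard : Fintype.card {i : Fin (2 * (n+1)) // i ≠ 0} ≤ 2 * n := by
        refine lemA n K hKrank _ (fun i => (⟨w i.1, hwK i.1⟩ : K)) ?_ ?_
        · intro i
          simp only [ne_eq, Submodule.mk_eq_zero]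
          exact hcon i.1 i.2
        · intro i j hij
          rw [Submodule.coe_inner]
          exact hwneg i.1 j.1 i.2 j.2 (fun h => hij (Subtype.ext h))
      rw [Fintype.card_subtype_compl, Fintype.card_subtype_eq, Fintype.card_fin] at hcard
      omega
    obtain ⟨j₀, hj₀ne, hwj₀⟩ := hexj
    have hvj₀ : v j₀ = ((inner ℝ (v 0) (v j₀) : ℝ) / ‖v 0‖ ^ 2) • v 0 := sub_eq_zero.mp hwj₀
    set t₀ : ℝ := (inner ℝ (v 0) (v j₀) : ℝ) / ‖v 0‖ ^ 2 with ht₀def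
    have ht₀neg : t₀ < 0 := by
      rcases lt_or_eq_of_le (div_nonpos_of_nonpos_of_nonneg (hneg 0 j₀ (Ne.symm hj₀ne))
        (le_of_lt hv₀)) with h | h
      · exact h
      · exfalso; apply hnz j₀; rw [hvj₀, ht₀def, h, zero_smul]
    -- all other vectors are orthogonal to v 0
    have horth : ∀ k, k ≠ 0 → k ≠ j₀ → (inner ℝ (v 0) (v k) : ℝ) = 0 := by
      intro k hk0 hkj
      have h1 : (inner ℝ (v 0) (v k) : ℝ) ≤ 0 := hneg 0 k (Ne.symm hk0)
      have h2 : (inner ℝ (v j₀) (v k) : ℝ) ≤ 0 := hneg j₀ k (fun h => hkj h.symm)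
      rw [hvj₀, inner_smul_left, conj_trivial] at h2
      nlinarith
    have hmemK : ∀ k, k ≠ 0 → k ≠ j₀ → v k ∈ K := by
      intro k hk0 hkj
      rw [hK, Submodule.mem_orthogonal_singleton_iff_inner_right]
      exact horth k hk0 hkj
    -- index equivalence
    have hcardsub : Fintype.card {i : Fin (2 * (n+1)) // i ≠ 0 ∧ i ≠ j₀} = 2 * n := by
      rw [Fintype.card_subtype]
      have : (Finset.univ.filter (fun i : Fin (2 * (n+1)) => i ≠ 0 ∧ i ≠ j₀)) =
          Finset.univ \ {0, j₀} := by
        ext i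
        simp only [Finset.mem_filter, Finset.mem_univ, true_and, Finset.mem_sdiff,
          Finset.mem_insert, Finset.mem_singleton, ne_eq]
        tauto
      rw [this, Finset.card_sdiff_of_subset (Finset.subset_univ _),
        Finset.card_insert_of_notMem (by simpa using hj₀ne.symm), Finset.card_singleton]
      simp only [Finset.card_univ, Fintype.card_fin]
      omega
    obtain ⟨ρ⟩ : Nonempty ({i : Fin (2 * (n+1)) // i ≠ 0 ∧ i ≠ j₀} ≃ Fin (2 * n)) :=
      ⟨Fintype.equivFinOfCardEq hcardsub⟩
    set v' : Fin (2 * n) → K := fun m => ⟨v (ρ.symm m).1, hmemK _ (ρ.symm m).2.1 (ρ.symm m).2.2⟩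
      with hv'
    obtain ⟨e', he'on, he'rep⟩ := IH K hKrank v'
      (by intro m; simp only [hv', ne_eq, Submodule.mk_eq_zero]; exact hnz _)
      (by
        intro m m' hmm
        rw [Submodule.coe_inner]
        apply hneg
        intro h
        exact hmm (by
          have := ρ.symm.injective (Subtype.ext h)
          simpa using this))
    have hnorm0 : ‖v 0‖ ≠ 0 := norm_ne_zero_iff.mpr (hnz 0)
    refine ⟨Fin.cons (‖v 0‖⁻¹ • v 0) (fun k => (e' k : E)), ?_, ?_⟩
    · constructor
      · intro i
        rcases Fin.eq_zero_or_eq_succ i with h | ⟨k, h⟩ <;> subst h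
        · rw [Fin.cons_zero]; exact norm_smul_inv_norm (hnz 0)
        · rw [Fin.cons_succ]
          exact he'on.1 k
      · intro i j hij
        have huK : ∀ k : Fin n, (inner ℝ (‖v 0‖⁻¹ • v 0) ((e' k : E)) : ℝ) = 0 := by
          intro k
          rw [inner_smul_left, conj_trivial,
            Submodule.mem_orthogonal_singleton_iff_inner_right.mp (e' k).2, mul_zero]
        rcases Fin.eq_zero_or_eq_succ i with h | ⟨k, h⟩ <;> subst h <;>
          rcases Fin.eq_zero_or_eq_succ j with h' | ⟨l, h'⟩ <;> subst h'
        · exact absurd rfl hij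
        · rw [Fin.cons_zero, Fin.cons_succ]; exact huK l
        · rw [Fin.cons_zero, Fin.cons_succ, real_inner_comm]; exact huK k
        · rw [Fin.cons_succ, Fin.cons_succ]
          have hkl : k ≠ l := fun h => hij (by rw [h])
          have h2 : (inner ℝ (e' k) (e' l) : ℝ) = 0 := he'on.2 hkl
          rw [Submodule.coe_inner] at h2
          exact h2
    · intro i
      by_cases hi0 : i = 0
      · refine ⟨(0 : Fin (n+1)), ‖v 0‖, hnorm0, ?_⟩
        rw [hi0, Fin.cons_zero, smul_smul, mul_inv_cancel₀ hnorm0, one_smul]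
      by_cases hij : i = j₀
      · refine ⟨(0 : Fin (n+1)), t₀ * ‖v 0‖, mul_ne_zero (ne_of_lt ht₀neg) hnorm0, ?_⟩
        rw [hij, Fin.cons_zero, hvj₀, smul_smul, mul_assoc, mul_inv_cancel₀ hnorm0, mul_one]
      · obtain ⟨k, t, ht, hrep⟩ := he'rep (ρ ⟨i, hi0, hij⟩)
        refine ⟨k.succ, t, ht, ?_⟩
        have h1 : (v' (ρ ⟨i, hi0, hij⟩) : E) = v i := by rw [hv']; simp
        rw [Fin.cons_succ, ← Submodule.coe_smul, ← hrep, h1]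

theorem packing_centers_form_cross_polytope (n : ℕ) (hn : 2 ≤ n)
    (c : EuclideanSpace ℝ (Fin n))
    (p : Fin (2 * n) → EuclideanSpace ℝ (Fin n))
    (hin : ∀ i, dist c (p i) ≤ Real.sqrt 2)
    (hsep : ∀ i j, i ≠ j → 2 ≤ dist (p i) (p j)) :
    ∃ b : OrthonormalBasis (Fin n) ℝ (EuclideanSpace ℝ (Fin n)),
      Set.range p =
        Set.range (fun i => c + Real.sqrt 2 • b i) ∪
        Set.range (fun i => c - Real.sqrt 2 • b i) := by
  classical
  have hs2 : Real.sqrt 2 ^ 2 = 2 := Real.sq_sqrt (by norm_num)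
  have hs2nn : (0:ℝ) ≤ Real.sqrt 2 := Real.sqrt_nonneg 2
  have hs2lt : Real.sqrt 2 < 2 := by nlinarith
  set v : Fin (2 * n) → EuclideanSpace ℝ (Fin n) := fun i => p i - c with hv
  have hpc : ∀ i, p i = c + v i := by intro i; simp [hv]
  have hrank : finrank ℝ (EuclideanSpace ℝ (Fin n)) = n := by
    simp [finrank_euclideanSpace]
  have hnormle : ∀ i, ‖v i‖ ≤ Real.sqrt 2 := by
    intro i
    rw [hv]
    rw [show ‖p i - c‖ = dist (p i) c from (dist_eq_norm _ _).symm, dist_comm]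
    exact hin i
  have hsq : ∀ i, ‖v i‖ ^ 2 ≤ 2 := by
    intro i; nlinarith [hnormle i, norm_nonneg (v i)]
  have hsep' : ∀ i j, i ≠ j → 2 ≤ ‖v i - v j‖ := by
    intro i j hij
    have h : v i - v j = p i - p j := by rw [hv]; beta_reduce; abel
    rw [h, show ‖p i - p j‖ = dist (p i) (p j) from (dist_eq_norm _ _).symm]
    exact hsep i j hij
  have hnz : ∀ i, v i ≠ 0 := by
    intro i h0
    obtain ⟨j, hj⟩ := Fintype.exists_ne_of_one_lt_card (by simp; omega) i
    have h := hsep' j i hj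
    rw [h0, sub_zero] at h
    linarith [hnormle j]
  have hneg : ∀ i j, i ≠ j → inner ℝ (v i) (v j) ≤ (0:ℝ) := by
    intro i j hij
    have h := hsep' i j hij
    have h4 : (4:ℝ) ≤ ‖v i - v j‖ ^ 2 := by nlinarith [norm_nonneg (v i - v j)]
    rw [norm_sub_sq_real] at h4
    nlinarith [hsq i, hsq j]
  obtain ⟨e, heon, hrep⟩ := lemB n _ hrank v hnz hneg
  choose k t ht hvt using hrep
  have hinner_self : ∀ m : Fin n, (inner ℝ (e m) (e m) : ℝ) = 1 := by
    intro m
    rw [real_inner_self_eq_norm_sq, heon.1 m]; norm_num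
  have hnormv : ∀ i, ‖v i‖ ^ 2 = t i ^ 2 := by
    intro i
    rw [hvt i, norm_smul, Real.norm_eq_abs, heon.1 (k i), mul_one, sq_abs]
  set F : Fin (2 * n) → Fin n × Bool := fun i => (k i, decide (0 < t i)) with hF
  have hFinj : Function.Injective F := by
    intro i j hij
    by_contra hne
    have hk : k i = k j := congrArg Prod.fst hij
    have hsgn : decide (0 < t i) = decide (0 < t j) := congrArg Prod.snd hij
    have hpos : 0 < t i * t j := by
      rcases lt_trichotomy (t i) 0 with h | h | h
      · have : ¬ (0 < t i) := by linarith
        have h2 : ¬ (0 < t j) := by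
          rw [decide_eq_decide] at hsgn; tauto
        have : t j < 0 := lt_of_le_of_ne (not_lt.mp h2) (ht j)
        exact mul_pos_of_neg_of_neg h this
      · exact absurd h (ht i)
      · have h2 : 0 < t j := by
          rw [decide_eq_decide] at hsgn; tauto
        exact mul_pos h h2
    have := hneg i j hne
    rw [hvt i, hvt j, inner_smul_left, inner_smul_right, conj_trivial, hk,
      hinner_self] at this
    nlinarith
  have hFbij : Function.Bijective F :=
    (Fintype.bijective_iff_injective_and_card F).mpr ⟨hFinj, by simp [mul_comm]⟩
  -- rigidity
  have ht2 : ∀ i, t i ^ 2 = 2 := by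
    intro i
    obtain ⟨k', hk'⟩ := Fintype.exists_ne_of_one_lt_card
      (by simp; omega : 1 < Fintype.card (Fin n)) (k i)
    obtain ⟨j, hj⟩ := hFbij.2 (k', true)
    have hkj : k j = k' := congrArg Prod.fst hj
    have hkne : k j ≠ k i := by rw [hkj]; exact hk'
    have hne : j ≠ i := fun h => hkne (by rw [h])
    have h := hsep' j i hne
    have h4 : (4:ℝ) ≤ ‖v j - v i‖ ^ 2 := by nlinarith [norm_nonneg (v j - v i)]
    have hperp : (inner ℝ (v j) (v i) : ℝ) = 0 := by
      rw [hvt j, hvt i, inner_smul_left, inner_smul_right, conj_trivial,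
        heon.2 hkne, mul_zero, mul_zero]
    rw [norm_sub_sq_real, hperp] at h4
    have h5 := hnormv i
    have h6 := hnormv j
    have h7 := hsq i
    have h8 := hsq j
    nlinarith
  have htval : ∀ i, t i = Real.sqrt 2 ∨ t i = -Real.sqrt 2 := by
    intro i
    have h := ht2 i
    have : (t i - Real.sqrt 2) * (t i + Real.sqrt 2) = 0 := by nlinarith
    rcases mul_eq_zero.mp this with h' | h'
    · left; linarith
    · right; linarith
  -- build the orthonormal basis
  haveI : Nonempty (Fin n) := ⟨⟨0, by omega⟩⟩
  have hcard : Fintype.card (Fin n) = finrank ℝ (EuclideanSpace ℝ (Fin n)) := by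
    simp [hrank]
  set bas := basisOfLinearIndependentOfCardEqFinrank heon.linearIndependent hcard with hbasdef
  have hbas : ⇑bas = e := coe_basisOfLinearIndependentOfCardEqFinrank _ _
  refine ⟨bas.toOrthonormalBasis (by rw [hbas]; exact heon), ?_⟩
  have hb : ∀ m : Fin n, (bas.toOrthonormalBasis (by rw [hbas]; exact heon)) m = e m := by
    intro m
    rw [Basis.coe_toOrthonormalBasis, hbas]
  ext x
  simp only [Set.mem_union, Set.mem_range]
  constructor
  · rintro ⟨i, rfl⟩
    rcases htval i with h | h
    · left
      exact ⟨k i, by rw [hb, hpc i, hvt i, h]⟩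
    · right
      refine ⟨k i, ?_⟩
      rw [hb, hpc i, hvt i, h, neg_smul, sub_eq_add_neg]
  · rintro (⟨k₀, rfl⟩ | ⟨k₀, rfl⟩)
    · obtain ⟨i, hi⟩ := hFbij.2 (k₀, true)
      have hk : k i = k₀ := congrArg Prod.fst hi
      have hs : decide (0 < t i) = true := congrArg Prod.snd hi
      have hpos : 0 < t i := of_decide_eq_true hs
      have hti : t i = Real.sqrt 2 := by
        rcases htval i with h | h
        · exact h
        · exfalso; nlinarith [Real.sqrt_pos.mpr (show (0:ℝ) < 2 by norm_num)]
      exact ⟨i, by rw [hpc i, hvt i, hti, hk, hb]⟩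
    · obtain ⟨i, hi⟩ := hFbij.2 (k₀, false)
      have hk : k i = k₀ := congrArg Prod.fst hi
      have hs : decide (0 < t i) = false := congrArg Prod.snd hi
      have hnpos : ¬ (0 < t i) := of_decide_eq_false hs
      have hti : t i = -Real.sqrt 2 := by
        rcases htval i with h | h
        · exfalso
          exact hnpos (by rw [h]; exact Real.sqrt_pos.mpr (by norm_num))
        · exact h
      refine ⟨i, ?_⟩
      rw [hpc i, hvt i, hti, hk, hb, neg_smul, sub_eq_add_neg]
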